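/- arXiv:2304.06973 — 2 statements merged into one kernel-verified Lean document; each statement's English description precedes it below -/
import Mathlib

section
/- Let a, b, c, g be real numbers with a > 0, b > 0, g ≥ 0. If cosh(g) = sinh(a)·sinh(b)·cosh(c) − cosh(a)·cosh(b) and cosh(c) ≤ 3, then g < a + b. -/
theorem stmt_1 (a b c g : ℝ) (ha : 0 < a) (hb : 0 < b) (hg : 0 ≤ g)
    (hhex : Real.cosh g = Real.sinh a * Real.sinh b * Real.cosh c - Real.cosh a * Real.cosh b)
    (hc : Real.cosh c ≤ 3) : g < a + b := by
  have hsa : 0 < Real.sinh a := Real.sinh_pos_iff.2 ha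
  have hsb : 0 < Real.sinh b := Real.sinh_pos_iff.2 hb
  have h1 : Real.sinh a < Real.cosh a := by
    nlinarith [Real.cosh_sub_sinh a, Real.exp_pos (-a)]
  have h2 : Real.sinh b < Real.cosh b := by
    nlinarith [Real.cosh_sub_sinh b, Real.exp_pos (-b)]
  have key : Real.cosh g < Real.cosh (a + b) := by
    rw [Real.cosh_add]
    nlinarith [hhex, mul_pos hsa hsb, mul_lt_mul_of_pos_left h2 hsa, mul_lt_mul_of_pos_right h1 (lt_trans hsb h2)]
  have := Real.cosh_lt_cosh.1 key
  calc g ≤ |g| := le_abs_self g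
    _ < |a + b| := this
    _ = a + b := abs_of_pos (by linarith)
end

section
/- Let a, b, h, x, y be real numbers with a > 0, b > 0, x > 0, y > 0, and 0 < h ≤ 2·arsinh(1). If sinh(x)·sinh(h/2) = cosh(a/2) and sinh(y)·sinh(h/2) = cosh(b/2), then x + y > (a + b)/2. -/
theorem stmt_4 (a b h x y : ℝ) (ha : 0 < a) (hb : 0 < b) (hx : 0 < x) (hy : 0 < y)
    (hh : 0 < h) (hh2 : h ≤ 2 * Real.arsinh 1)
    (hpx : Real.sinh x * Real.sinh (h / 2) = Real.cosh (a / 2))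
    (hpy : Real.sinh y * Real.sinh (h / 2) = Real.cosh (b / 2)) :
    x + y > (a + b) / 2 := by
  have hs0 : 0 < Real.sinh (h / 2) := Real.sinh_pos_iff.mpr (by linarith)
  have hs1 : Real.sinh (h / 2) ≤ 1 := by
    have := Real.sinh_le_sinh.mpr (show h / 2 ≤ Real.arsinh 1 by linarith)
    rwa [Real.sinh_arsinh] at this
  have key : ∀ t u : ℝ, Real.sinh u * Real.sinh (h / 2) = Real.cosh (t / 2) → u > t / 2 := by
    intro t u hput
    have h1 : Real.sinh (t / 2) < Real.cosh (t / 2) := Real.sinh_lt_cosh _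
    have h2 : Real.cosh (t / 2) ≤ Real.sinh u := by
      nlinarith [Real.cosh_pos (t / 2)]
    exact Real.sinh_lt_sinh.mp (lt_of_lt_of_le h1 h2)
  have h1 := key a x hpx
  have h2 := key b y hpy
  linarith
end
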